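/- arXiv:1707.02598 — 3 statements merged into one kernel-verified Lean document; each statement's English description precedes it below -/
import Mathlib

section
/- Let R be an invertible n×n real matrix whose inverse R^{−1} has all entries nonnegative, and let r^1,…,r^n denote the columns of R. For each i ∈ {1,…,n} let w^i := e^i / ‖R^{−1}e^i‖_1, where e^i is the i-th standard basis vector of ℝ^n and ‖·‖_1 is the ℓ^1-norm. Then w^i ∈ D := conv(r^1,…,r^n) ∩ ℝ^n_{≥0} for every i, and D = conv(w^1,…,w^n). -/
/-- **If `R` is an invertible matrix whose inverse is (entrywise) nonnegative, and
`w^i := e^i / ‖R⁻¹ e^i‖₁`, then each `w^i` lies in `D := conv(r^1,…,r^n) ∩ ℝ^n_{≥0}`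
(where `r^1,…,r^n` are the columns of `R`) and `D = conv(w^1,…,w^n)`.** -/
theorem inverse_positive_matrix_Dset_eq (n : ℕ) (R : Matrix (Fin n) (Fin n) ℝ)
    (hdet : IsUnit R.det) (hinv : ∀ i j, 0 ≤ R⁻¹ i j) :
    ∀ w : Fin n → Fin n → ℝ,
      (w = fun i => (∑ j, |R⁻¹.mulVec (Pi.single i 1) j|)⁻¹ • (Pi.single i 1 : Fin n → ℝ)) →
      ∀ D : Set (Fin n → ℝ),
        (D = convexHull ℝ (Set.range R.transpose) ∩ {x | ∀ i, 0 ≤ x i}) →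
        (∀ i, w i ∈ D) ∧ D = convexHull ℝ (Set.range w) := by
  intro w hw D hD
  have hRR : R⁻¹ * R = 1 := Matrix.nonsing_inv_mul R hdet
  have hRR' : R * R⁻¹ = 1 := Matrix.mul_nonsing_inv R hdet
  set s : Fin n → ℝ := fun i => ∑ j, R⁻¹ j i with hs_def
  have hs0 : ∀ i, 0 < s i := by
    intro i
    have h1 : 0 ≤ s i := Finset.sum_nonneg fun j _ => hinv j i
    rcases h1.lt_or_eq with h | h
    · exact h
    · exfalso
      have hall : ∀ j ∈ Finset.univ, R⁻¹ j i = 0 :=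
        (Finset.sum_eq_zero_iff_of_nonneg (fun j _ => hinv j i)).1 h.symm
      have h0 : (R * R⁻¹) i i = 0 := by
        rw [Matrix.mul_apply]
        exact Finset.sum_eq_zero fun k _ => by
          rw [hall k (Finset.mem_univ k), mul_zero]
      rw [hRR'] at h0
      simp at h0
  have hw' : ∀ i, w i = (s i)⁻¹ • (Pi.single i 1 : Fin n → ℝ) := by
    intro i
    have hsum : (∑ j, |R⁻¹.mulVec (Pi.single i 1) j|) = s i := by
      refine Finset.sum_congr rfl fun j _ => ?_
      simp only [Matrix.mulVec_single, mul_one]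
      simpa [Matrix.col_apply] using abs_of_nonneg (hinv j i)
    simp only [hw]
    rw [hsum]
  -- each w i is in the convex hull of columns
  have hmem : ∀ i, w i ∈ convexHull ℝ (Set.range R.transpose) := by
    intro i
    apply mem_convexHull_of_exists_fintype (fun j => R⁻¹ j i / s i) R.transpose
    · intro j
      exact div_nonneg (hinv j i) (hs0 i).le
    · rw [← Finset.sum_div]
      exact div_self (hs0 i).ne'
    · intro j; exact Set.mem_range_self j
    · funext k
      rw [hw' i]
      simp only [Finset.sum_apply, Pi.smul_apply, smul_eq_mul, Matrix.transpose_apply]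
      have : ∑ j, R⁻¹ j i / s i * R k j = (s i)⁻¹ * (R * R⁻¹) k i := by
        rw [Matrix.mul_apply, Finset.mul_sum]
        refine Finset.sum_congr rfl fun j _ => ?_
        field_simp
      rw [this, hRR']
      by_cases hki : k = i
      · subst hki; simp
      · simp [Matrix.one_apply, hki, Pi.single_apply]
  have hwpos : ∀ i k, 0 ≤ w i k := by
    intro i k
    rw [hw' i]
    simp only [Pi.smul_apply, smul_eq_mul]
    apply mul_nonneg (inv_nonneg.2 (hs0 i).le)
    by_cases hki : k = i
    · subst hki; simp
    · simp [Pi.single_apply, hki]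
  have hwD : ∀ i, w i ∈ D := by
    intro i
    rw [hD]
    exact ⟨hmem i, hwpos i⟩
  refine ⟨hwD, ?_⟩
  apply Set.Subset.antisymm
  · -- D ⊆ conv(range w)
    rintro x hx
    rw [hD] at hx
    obtain ⟨hx1, hx2⟩ := hx
    rw [convexHull_range_eq_exists_affineCombination (v := R.transpose)] at hx1
    obtain ⟨t, tw, htw0, htw1, hcomb⟩ := hx1
    rw [Finset.affineCombination_eq_linear_combination _ R.transpose _ htw1] at hcomb
    set t' : Fin n → ℝ := fun i => if i ∈ t then tw i else 0 with ht'_def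
    have hxdef : x = ∑ i, t' i • R.transpose i := by
      rw [← hcomb, ← Finset.sum_subset (Finset.subset_univ t)
        (fun i _ hi => by simp [ht'_def, hi])]
      exact Finset.sum_congr rfl fun i hi => by simp [ht'_def, hi]
    have ht'0 : ∀ i, 0 ≤ t' i := by
      intro i
      by_cases hi : i ∈ t
      · simpa [ht'_def, hi] using htw0 i hi
      · simp [ht'_def, hi]
    have ht'sum : ∑ i, t' i = 1 := by
      rw [← Finset.sum_subset (Finset.subset_univ t) (fun i _ hi => by simp [ht'_def, hi]),
        ← htw1]
      exact Finset.sum_congr rfl fun i hi => by simp [ht'_def, hi]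
    have hxk : ∀ k, x k = ∑ i, t' i * R k i := by
      intro k
      rw [hxdef]
      simp [Finset.sum_apply, Matrix.transpose_apply]
    have hmv : ∀ j, R⁻¹.mulVec x j = t' j := by
      intro j
      have h1 : R⁻¹.mulVec x j = ∑ k, ∑ i, R⁻¹ j k * (t' i * R k i) := by
        simp only [Matrix.mulVec, dotProduct]
        exact Finset.sum_congr rfl fun k _ => by rw [hxk k, Finset.mul_sum]
      rw [h1, Finset.sum_comm]
      have h2 : ∀ i, ∑ k, R⁻¹ j k * (t' i * R k i) = t' i * (R⁻¹ * R) j i := by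
        intro i
        rw [Matrix.mul_apply, Finset.mul_sum]
        exact Finset.sum_congr rfl fun k _ => by ring
      rw [Finset.sum_congr rfl fun i _ => h2 i, hRR]
      simp [Matrix.one_apply, mul_ite]
    apply mem_convexHull_of_exists_fintype (fun i => x i * s i) w
    · intro i; exact mul_nonneg (hx2 i) (hs0 i).le
    · have h3 : ∑ i, x i * s i = ∑ j, R⁻¹.mulVec x j := by
        simp only [hs_def, Matrix.mulVec, dotProduct, Finset.mul_sum]
        rw [Finset.sum_comm]
        exact Finset.sum_congr rfl fun i _ => Finset.sum_congr rfl fun j _ => by ring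
      rw [h3, Finset.sum_congr rfl fun j _ => hmv j, ht'sum]
    · intro i; exact Set.mem_range_self i
    · funext k
      simp only [Finset.sum_apply, Pi.smul_apply, smul_eq_mul]
      have h4 : ∀ i, (x i * s i) * w i k = x i * (Pi.single i 1 : Fin n → ℝ) k := by
        intro i
        rw [hw' i]
        simp only [Pi.smul_apply, smul_eq_mul]
        have hne := (hs0 i).ne'
        field_simp
      rw [Finset.sum_congr rfl fun i _ => h4 i]
      simp [Pi.single_apply, mul_ite]
  · -- conv(range w) ⊆ D
    rw [hD]
    apply convexHull_min
    · rintro _ ⟨i, rfl⟩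
      rw [← hD]; exact hwD i
    · apply Convex.inter (convex_convexHull ℝ _)
      intro x hx y hy a b ha hb hab
      intro i
      exact add_nonneg (mul_nonneg ha (hx i)) (mul_nonneg hb (hy i))
end

section
/- Let R be an invertible n×n real matrix with zero diagonal, with exactly one positive entry in each row and each column, and whose inverse R^{−1} has all entries nonnegative. Let r^1,…,r^n denote the columns of R, let D := conv(r^1,…,r^n) ∩ ℝ^n_{≥0}, and for each i let w^i := e^i / ‖R^{−1}e^i‖_1 and let j_i be the unique index j with r^j_i > 0. Then for each i ∈ {1,…,n} there exist α ∈ (0,1) and y ∈ D such that w^i = α r^{j_i} + (1−α) y. -/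
/-- **Let `R` be an invertible matrix with zero diagonal, exactly one positive entry in
each row and each column, and a (entrywise) nonnegative inverse. Let `r^1,…,r^n` be its
columns, `D := conv(r^1,…,r^n) ∩ ℝ^n_{≥0}`, `w^i := e^i / ‖R⁻¹ e^i‖₁`, and let `j_i` be
the unique index `j` with `r^j_i > 0`. Then for each `i` there are `α ∈ (0,1)` and
`y ∈ D` with `w^i = α r^{j_i} + (1 − α) y`.** -/
theorem w_decomposition_of_M_matrix (n : ℕ) (R : Matrix (Fin n) (Fin n) ℝ)
    (hdet : IsUnit R.det)
    (hdiag : ∀ i, R i i = 0)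
    (hrow : ∀ i, ∃! j, 0 < R i j)
    (hcol : ∀ j, ∃! i, 0 < R i j)
    (hinv : ∀ i j, 0 ≤ R⁻¹ i j)
    (i ji : Fin n) (hji : 0 < R i ji) :
    ∃ (α : ℝ) (y : Fin n → ℝ), α ∈ Set.Ioo (0 : ℝ) 1 ∧
      y ∈ convexHull ℝ (Set.range R.transpose) ∩ {x : Fin n → ℝ | ∀ k, 0 ≤ x k} ∧
      (∑ j, |R⁻¹.mulVec (Pi.single i 1) j|)⁻¹ • (Pi.single i 1 : Fin n → ℝ) =
        α • R.transpose ji + (1 - α) • y := by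
  classical
  set c : Fin n → ℝ := R⁻¹.mulVec (Pi.single i 1) with hc
  have hcdef : ∀ j, c j = R⁻¹ j i := by
    intro j; simp [hc, Matrix.mulVec_single]
  have hcnn : ∀ j, 0 ≤ c j := fun j => (hcdef j) ▸ hinv j i
  have hRc : R.mulVec c = Pi.single i 1 := by
    rw [hc, Matrix.mulVec_mulVec, Matrix.mul_nonsing_inv R hdet, Matrix.one_mulVec]
  set s : ℝ := ∑ j, c j with hs
  have habs : (∑ j, |c j|) = s := Finset.sum_congr rfl (fun j _ => abs_of_nonneg (hcnn j))
  -- row i: entries off ji are ≤ 0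
  have hrowi : ∀ j, j ≠ ji → R i j ≤ 0 := by
    intro j hj
    by_contra h
    push_neg at h
    obtain ⟨j0, _, huniq⟩ := hrow i
    exact hj ((huniq j h).trans (huniq ji hji).symm)
  have hcolji : ∀ k, k ≠ i → R k ji ≤ 0 := by
    intro k hk
    by_contra h
    push_neg at h
    obtain ⟨k0, _, huniq⟩ := hcol ji
    exact hk ((huniq k h).trans (huniq i hji).symm)
  have hrowsum : (1:ℝ) = ∑ j, R i j * c j := by
    have h := congrFun hRc i
    simp only [Matrix.mulVec, dotProduct, Pi.single_eq_same] at h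
    exact h.symm
  have hkey : 1 ≤ R i ji * c ji := by
    have hsplit : R i ji * c ji + ∑ x ∈ Finset.univ.erase ji, R i x * c x
        = ∑ x, R i x * c x :=
      Finset.add_sum_erase Finset.univ (fun j => R i j * c j) (Finset.mem_univ ji)
    have hle : ∑ j ∈ Finset.univ.erase ji, R i j * c j ≤ 0 := by
      apply Finset.sum_nonpos
      intro j hjmem
      exact mul_nonpos_of_nonpos_of_nonneg (hrowi j (Finset.ne_of_mem_erase hjmem)) (hcnn j)
    rw [hrowsum, ← hsplit]
    linarith
  have hcji : 0 < c ji := by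
    by_contra h
    push_neg at h
    have := mul_nonpos_of_nonneg_of_nonpos (le_of_lt hji) h
    linarith
  have hcjile : c ji ≤ s := Finset.single_le_sum (fun j _ => hcnn j) (Finset.mem_univ ji)
  have hspos : 0 < s := lt_of_lt_of_le hcji hcjile
  have ht1 : 1 ≤ s * R i ji := by
    have h2 : R i ji * c ji ≤ R i ji * s := mul_le_mul_of_nonneg_left hcjile (le_of_lt hji)
    have h3 : R i ji * s = s * R i ji := mul_comm _ _
    linarith
  set α : ℝ := 1 / (s * R i ji + 1) with hα
  have htpos : (0:ℝ) < s * R i ji + 1 := by linarith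
  have hα0 : 0 < α := by rw [hα]; exact one_div_pos.mpr htpos
  have hα1 : α < 1 := by rw [hα, div_lt_one htpos]; linarith
  have h1α : (0:ℝ) < 1 - α := by linarith
  have hbound : α ≤ c ji / s := by
    rw [hα, div_le_div_iff₀ htpos hspos]
    nlinarith [mul_le_mul_of_nonneg_left hkey (le_of_lt hspos), hcnn ji]
  have hbound2 : α * R i ji ≤ s⁻¹ := by
    rw [hα, inv_eq_one_div, div_mul_eq_mul_div, one_mul, div_le_div_iff₀ htpos hspos]
    nlinarith
  set lam : Fin n → ℝ := fun j => (1 - α)⁻¹ * (c j / s - if j = ji then α else 0) with hlam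
  set y : Fin n → ℝ := ∑ j, lam j • R.transpose j with hy
  have hyk : ∀ k, y k = (1 - α)⁻¹ * (s⁻¹ * (Pi.single i 1 : Fin n → ℝ) k - α * R k ji) := by
    intro k
    have hsum : ∑ j, R k j * c j = (Pi.single i 1 : Fin n → ℝ) k := by
      have h := congrFun hRc k
      simpa [Matrix.mulVec, dotProduct] using h
    have : y k = ∑ j, ((1 - α)⁻¹ * (c j / s) * R k j
        - (1 - α)⁻¹ * ((if j = ji then α else 0) * R k j)) := by
      rw [hy]
      simp only [Finset.sum_apply, Pi.smul_apply, Matrix.transpose_apply, smul_eq_mul, hlam]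
      exact Finset.sum_congr rfl (fun j _ => by ring)
    have e1 : ∑ j, (1 - α)⁻¹ * (c j / s) * R k j
        = (1 - α)⁻¹ * s⁻¹ * ∑ j, R k j * c j := by
      rw [Finset.mul_sum]
      exact Finset.sum_congr rfl (fun j _ => by ring)
    have e2 : ∑ j, (1 - α)⁻¹ * ((if j = ji then α else 0) * R k j)
        = (1 - α)⁻¹ * (α * R k ji) := by
      rw [← Finset.mul_sum]
      congr 1
      simp [ite_mul, Finset.sum_ite_eq']
    rw [this, Finset.sum_sub_distrib, e1, e2, hsum]
    ring
  refine ⟨α, y, ⟨hα0, hα1⟩, ⟨?_, ?_⟩, ?_⟩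
  · -- convex hull membership
    apply Convex.sum_mem (convex_convexHull ℝ _)
    · intro j _
      rw [hlam]
      apply mul_nonneg (le_of_lt (inv_pos.mpr h1α))
      by_cases hjj : j = ji
      · subst hjj
        simp only [if_pos rfl]
        rw [sub_nonneg]
        exact hbound
      · simp only [if_neg hjj, sub_zero]
        exact div_nonneg (hcnn j) (le_of_lt hspos)
    · rw [hlam]
      simp only
      rw [Finset.sum_congr rfl (fun j _ => mul_sub ((1-α)⁻¹) _ _), Finset.sum_sub_distrib,
        ← Finset.mul_sum, ← Finset.mul_sum]
      rw [Finset.sum_ite_eq' Finset.univ ji (fun _ => α)]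
      simp only [Finset.mem_univ, if_pos]
      rw [← Finset.sum_div, ← hs, div_self (ne_of_gt hspos)]
      field_simp
    · intro j _
      exact subset_convexHull ℝ _ ⟨j, rfl⟩
  · -- nonnegativity
    intro k
    rw [hyk k]
    apply mul_nonneg (le_of_lt (inv_pos.mpr h1α))
    by_cases hk : k = i
    · subst hk
      rw [Pi.single_eq_same, mul_one, sub_nonneg]
      exact hbound2
    · rw [Pi.single_eq_of_ne hk, mul_zero, zero_sub, neg_nonneg]
      exact mul_nonpos_of_nonneg_of_nonpos (le_of_lt hα0) (hcolji k hk)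
  · -- the decomposition identity
    rw [habs]
    funext k
    simp only [Pi.add_apply, Pi.smul_apply, Matrix.transpose_apply, smul_eq_mul]
    rw [hyk k]
    field_simp
    ring
end

section
/- Let r^1,…,r^n ∈ ℝ^n satisfy r^i_i = 0 for every i, and let D := conv(r^1,…,r^n) ∩ ℝ^n_{≥0}. Suppose y ∈ D, w^1,…,w^n ∈ ℝ^n, and z = (z_0,z_1,…,z_n) with z_i ≥ 0 and ∑_{i=0}^n z_i = 1 satisfy: w^i ∈ conv({y, r^i}) \ {y, r^i} for every i; y = z_0 y + ∑_{i=1}^n z_i w^i; w^i_i = 0 whenever z_i > 0; and ∑_{i=1}^n z_i > 0. Then the linear complementarity problem LCP((r^i)_{i=1}^n, 0) has a nontrivial solution (a solution with z_0 < 1). In other words, if LCP((r^i), 0) has no nontrivial solution, then the map y ↦ w provided by the basic building block (with w^i ≠ r^i) has no fixed point on ∂D. -/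
noncomputable section

/-- A solution `(w,z)` of the linear complementarity problem `LCP((r^i)_{i=1}^n, q)`,
where `r i` is the vector `r^i`: `w ∈ ℝ^n_{≥0}`, `z ∈ Δ({0,1,…,n})`,
`w = z_0 q + ∑_i z_i r^i`, and `z_i = 0` or `w_i = 0` for every `i ∈ [n]`. -/
def IsLCPSolution (n : ℕ) (r : Fin n → Fin n → ℝ) (q w : Fin n → ℝ)
    (z : Fin (n + 1) → ℝ) : Prop :=
  (∀ i, 0 ≤ w i) ∧ (∀ i, 0 ≤ z i) ∧ (∑ i, z i = 1) ∧
    (∀ j, w j = z 0 * q j + ∑ i : Fin n, z i.succ * r i j) ∧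
    (∀ i : Fin n, z i.succ = 0 ∨ w i = 0)

/-- The matrix with columns `r^1,…,r^n` is a `Q`-matrix if `LCP((r^i), q)` has a solution
for every `q ∈ ℝ^n`. -/
def IsQMatrix (n : ℕ) (r : Fin n → Fin n → ℝ) : Prop :=
  ∀ q : Fin n → ℝ, ∃ (w : Fin n → ℝ) (z : Fin (n + 1) → ℝ), IsLCPSolution n r q w z

/-- The set `D := conv(r^1,…,r^n) ∩ ℝ^n_{≥0}`. -/
def Dset (n : ℕ) (r : Fin n → Fin n → ℝ) : Set (Fin n → ℝ) :=
  convexHull ℝ (Set.range r) ∩ {x | ∀ i, 0 ≤ x i}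


/-- **If the basic building block admits a fixed point (there are `y ∈ D`, `w^i` strictly
between `y` and `r^i`, and `z ∈ Δ({0,…,n})` with `y = z_0 y + ∑_i z_i w^i`, `w^i_i = 0`
whenever `z_i > 0`, and `∑_{i≥1} z_i > 0`), then `LCP((r^i), 0)` has a nontrivial
solution.** -/
theorem lcp_nontrivial_solution_of_fixed_point (n : ℕ) (r : Fin n → Fin n → ℝ)
    (hdiag : ∀ i, r i i = 0)
    (y : Fin n → ℝ) (hy : y ∈ Dset n r)
    (W : Fin n → Fin n → ℝ) (z : Fin (n + 1) → ℝ)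
    (hz : ∀ i, 0 ≤ z i) (hzsum : ∑ i, z i = 1)
    (hW : ∀ i, W i ∈ segment ℝ y (r i) \ {y, r i})
    (heq : ∀ j, y j = z 0 * y j + ∑ i : Fin n, z i.succ * W i j)
    (hcomp : ∀ i : Fin n, 0 < z i.succ → W i i = 0)
    (hpos : 0 < ∑ i : Fin n, z i.succ) :
    ∃ (w' : Fin n → ℝ) (z' : Fin (n + 1) → ℝ),
      IsLCPSolution n r 0 w' z' ∧ z' 0 < 1 := by
  -- extract strict interpolation parameters
  have h : ∀ i, ∃ t : ℝ, 0 < t ∧ t < 1 ∧ ∀ j, W i j = (1 - t) * y j + t * r i j := by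
    intro i
    obtain ⟨hseg, hne⟩ := hW i
    obtain ⟨a, b, ha, hb, hab, habW⟩ := hseg
    have hWy : W i ≠ y := by intro hc; exact hne (by simp [hc])
    have hWr : W i ≠ r i := by intro hc; exact hne (by simp [hc])
    refine ⟨b, ?_, ?_, ?_⟩
    · rcases lt_or_eq_of_le hb with h | h
      · exact h
      · exfalso; apply hWy
        have : a = 1 := by linarith
        rw [← habW, ← h, this]; funext j; simp
    · rcases lt_or_eq_of_le (by linarith : b ≤ 1) with h | h
      · exact h
      · exfalso; apply hWr
        have : a = 0 := by linarith
        rw [← habW, this, h]; funext j; simp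
    · intro j
      have : a = 1 - b := by linarith
      rw [← habW, this]; simp [Pi.add_apply, smul_eq_mul]
  choose t ht0 ht1 htW using h
  set s : ℝ := ∑ i : Fin n, z i.succ * t i with hs
  have hex : ∃ i : Fin n, 0 < z i.succ := by
    by_contra hc
    push_neg at hc
    have : ∑ i : Fin n, z i.succ ≤ 0 := Finset.sum_nonpos fun i _ => hc i
    linarith
  have hspos : 0 < s := by
    obtain ⟨i, hi⟩ := hex
    refine Finset.sum_pos' (fun j _ => mul_nonneg (hz _) (ht0 j).le) ⟨i, Finset.mem_univ i, mul_pos hi (ht0 i)⟩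
  have hz0 : z 0 + ∑ i : Fin n, z i.succ = 1 := by
    rw [← hzsum, Fin.sum_univ_succ]
  -- key equation: s * y j = ∑ z_{i+1} t_i r_i j
  have hkey : ∀ j, s * y j = ∑ i : Fin n, z i.succ * t i * r i j := by
    intro j
    have := heq j
    have h2 : ∑ i : Fin n, z i.succ * W i j
        = (∑ i : Fin n, z i.succ * (1 - t i)) * y j + ∑ i : Fin n, z i.succ * t i * r i j := by
      rw [Finset.sum_mul, ← Finset.sum_add_distrib]
      refine Finset.sum_congr rfl fun i _ => ?_
      rw [htW i j]; ring
    have h3 : ∑ i : Fin n, z i.succ * (1 - t i) = (∑ i : Fin n, z i.succ) - s := by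
      rw [hs, ← Finset.sum_sub_distrib]
      refine Finset.sum_congr rfl fun i _ => by ring
    rw [h2, h3] at this
    linear_combination this + y j * hz0
  refine ⟨y, Fin.cases 0 (fun i => z i.succ * t i / s), ⟨hy.2, ?_, ?_, ?_, ?_⟩, by norm_num⟩
  · intro i
    refine Fin.cases ?_ (fun j => ?_) i
    · simp
    · simp only [Fin.cases_succ]
      exact div_nonneg (mul_nonneg (hz _) (ht0 _).le) hspos.le
  · rw [Fin.sum_univ_succ]
    simp only [Fin.cases_zero, Fin.cases_succ, zero_add]
    rw [← Finset.sum_div, ← hs, div_self hspos.ne']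
  · intro j
    simp only [Fin.cases_zero, Fin.cases_succ, Pi.zero_apply, mul_zero, zero_add]
    have : ∑ i : Fin n, z i.succ * t i / s * r i j
        = (∑ i : Fin n, z i.succ * t i * r i j) / s := by
      rw [Finset.sum_div]
      refine Finset.sum_congr rfl fun i _ => by ring
    rw [this, ← hkey j, mul_div_cancel_left₀ _ hspos.ne']
  · intro i
    simp only [Fin.cases_succ]
    rcases eq_or_lt_of_le (hz i.succ) with h | h
    · left; rw [← h]; ring
    · right
      have hW0 := hcomp i h
      rw [htW i i, hdiag i, mul_zero, add_zero] at hW0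
      have : (1 : ℝ) - t i ≠ 0 := by linarith [ht1 i]
      exact (mul_eq_zero.mp hW0).resolve_left this

end
end
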